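/- If a polynomial family is the image of a connected parameter set under a continuous map into polynomials of fixed degree m (no degree dropping), and some member of the family is Hurwitz stable while some other member has a root with nonnegative real part, then some member of the family has a root on the imaginary axis (boundary crossing / zero exclusion principle for degree-invariant families). -/

import Mathlib

open Polynomial

open Filter Topology


/-- product of mapped multiset is at least `c ^ card` if every value is at least `c ≥ 0`. -/
lemma aux_pow_card_le_prod_map (s : Multiset ℂ) (f : ℂ → ℝ) (c : ℝ) (hc : 0 ≤ c)
    (h : ∀ r ∈ s, c ≤ f r) : c ^ Multiset.card s ≤ (s.map f).prod := by
  induction s using Multiset.induction with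
  | empty => simp
  | cons a s ih =>
    simp only [Multiset.map_cons, Multiset.prod_cons, Multiset.card_cons, pow_succ]
    rw [mul_comm (c ^ Multiset.card s) c]
    have h1 : c ≤ f a := h a (Multiset.mem_cons_self a s)
    have h2 : c ^ Multiset.card s ≤ (Multiset.map f s).prod :=
      ih (fun r hr => h r (Multiset.mem_cons_of_mem hr))
    exact mul_le_mul h1 h2 (pow_nonneg hc _) (le_trans hc h1)

lemma aux_prod_map_mono (s : Multiset ℂ) (f g : ℂ → ℝ)
    (h : ∀ r ∈ s, 0 ≤ f r ∧ f r ≤ g r) : (s.map f).prod ≤ (s.map g).prod := by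
  induction s using Multiset.induction with
  | empty => simp
  | cons a s ih =>
    simp only [Multiset.map_cons, Multiset.prod_cons]
    have h1 := h a (Multiset.mem_cons_self a s)
    have h2 : (Multiset.map f s).prod ≤ (Multiset.map g s).prod :=
      ih (fun r hr => h r (Multiset.mem_cons_of_mem hr))
    have hf : 0 ≤ (Multiset.map f s).prod :=
      Multiset.prod_nonneg (by
        intro x hx
        obtain ⟨r, hr, rfl⟩ := Multiset.mem_map.mp hx
        exact (h r (Multiset.mem_cons_of_mem hr)).1)
    exact mul_le_mul h1.2 h2 hf (le_trans h1.1 h1.2)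

/-- lower bound for the modulus of a complex polynomial in terms of real parts of roots. -/
lemma aux_eval_lower_bound (q : ℂ[X]) (z : ℂ) (h : ∀ r ∈ q.roots, 0 ≤ z.re - r.re) :
    ‖q.leadingCoeff‖ * (Multiset.map (fun r => z.re - r.re) q.roots).prod ≤ ‖q.eval z‖ := by
  have hsp : q = C q.leadingCoeff * (Multiset.map (fun a => X - C a) q.roots).prod :=
    (IsAlgClosed.splits q).eq_prod_roots
  have heval : ‖q.eval z‖ = ‖q.leadingCoeff‖ * (Multiset.map (fun r => ‖z - r‖) q.roots).prod := by
    conv_lhs => rw [hsp]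
    rw [eval_mul, eval_C, norm_mul, eval_multiset_prod, Multiset.map_map]
    congr 1
    rw [show (Multiset.map (eval z ∘ fun a => X - C a) q.roots) = Multiset.map (fun r => z - r) q.roots by
      refine Multiset.map_congr rfl (fun r _ => ?_); simp]
    induction q.roots using Multiset.induction with
    | empty => simp
    | cons a s ih => simp [norm_mul, ih]
  rw [heval]
  refine mul_le_mul_of_nonneg_left ?_ (norm_nonneg _)
  refine aux_prod_map_mono _ _ _ (fun r hr => ⟨h r hr, ?_⟩)
  calc z.re - r.re = (z - r).re := by simp
    _ ≤ ‖z - r‖ := Complex.re_le_norm _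

/-- Cauchy-type bound for roots. -/
lemma aux_root_norm_bound (q : ℂ[X]) (m : ℕ) (hdeg : q.natDegree ≤ m) (δ M : ℝ)
    (hδ : 0 < δ) (hlc : δ ≤ ‖q.coeff m‖) (hM : ∀ j, j < m → ‖q.coeff j‖ ≤ M)
    (z : ℂ) (hz : q.eval z = 0) : ‖z‖ ≤ max 1 (m * M / δ) := by
  by_contra hcon
  push_neg at hcon
  have h1 : (1:ℝ) < ‖z‖ := lt_of_le_of_lt (le_max_left _ _) hcon
  have hsum : q.eval z = ∑ j ∈ Finset.range (m+1), q.coeff j * z ^ j :=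
    eval_eq_sum_range' (Nat.lt_succ_of_le hdeg) z
  rw [hz, Finset.sum_range_succ] at hsum
  have key : ‖q.coeff m * z ^ m‖ = ‖∑ j ∈ Finset.range m, q.coeff j * z ^ j‖ := by
    have : q.coeff m * z ^ m = -∑ j ∈ Finset.range m, q.coeff j * z ^ j := by
      linear_combination -hsum
    rw [this, norm_neg]
  rcases Nat.eq_zero_or_pos m with hm | hm
  · subst hm
    simp at key
    rw [key] at hlc
    simp at hlc
    linarith
  have hMnn : 0 ≤ M := le_trans (norm_nonneg _) (hM 0 hm)
  have hb : ‖∑ j ∈ Finset.range m, q.coeff j * z ^ j‖ ≤ m * (M * ‖z‖ ^ (m-1)) := by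
    calc ‖∑ j ∈ Finset.range m, q.coeff j * z ^ j‖
        ≤ ∑ j ∈ Finset.range m, ‖q.coeff j * z ^ j‖ := norm_sum_le _ _
      _ ≤ ∑ j ∈ Finset.range m, M * ‖z‖ ^ (m-1) := by
          refine Finset.sum_le_sum (fun j hj => ?_)
          rw [norm_mul, norm_pow]
          refine mul_le_mul (hM j (Finset.mem_range.mp hj)) ?_ (pow_nonneg (norm_nonneg _) _) hMnn
          exact pow_le_pow_right₀ (le_of_lt h1) (Nat.le_sub_one_of_lt (Finset.mem_range.mp hj))
      _ = m * (M * ‖z‖ ^ (m-1)) := by rw [Finset.sum_const, Finset.card_range, nsmul_eq_mul]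
  have hzm : ‖z‖ ^ m = ‖z‖ * ‖z‖ ^ (m-1) := by
    conv_lhs => rw [show m = (m-1)+1 from (Nat.succ_pred_eq_of_pos hm).symm]
    rw [pow_succ, mul_comm]
  have hlow : δ * (‖z‖ * ‖z‖ ^ (m-1)) ≤ m * (M * ‖z‖ ^ (m-1)) := by
    calc δ * (‖z‖ * ‖z‖ ^ (m-1)) = δ * ‖z‖ ^ m := by rw [hzm]
      _ ≤ ‖q.coeff m‖ * ‖z‖ ^ m :=
          mul_le_mul_of_nonneg_right hlc (pow_nonneg (norm_nonneg _) _)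
      _ = ‖q.coeff m * z ^ m‖ := by rw [norm_mul, norm_pow]
      _ = _ := key
      _ ≤ _ := hb
  have hp : (0:ℝ) < ‖z‖ ^ (m-1) := pow_pos (by linarith) _
  have h2 : δ * ‖z‖ ≤ m * M := by
    have h3 : (δ * ‖z‖) * ‖z‖ ^ (m-1) ≤ (m * M) * ‖z‖ ^ (m-1) := by
      calc (δ * ‖z‖) * ‖z‖ ^ (m-1) = δ * (‖z‖ * ‖z‖ ^ (m-1)) := by ring
        _ ≤ m * (M * ‖z‖ ^ (m-1)) := hlow
        _ = (m * M) * ‖z‖ ^ (m-1) := by ring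
    exact le_of_mul_le_mul_right h3 hp
  have h4 : ‖z‖ ≤ m * M / δ := (le_div_iff₀ hδ).mpr (by linarith)
  have h5 : (m:ℝ) * M / δ < ‖z‖ := lt_of_le_of_lt (le_max_right 1 _) hcon
  linarith


/-- coefficientwise bound on evaluation differences. -/
lemma aux_eval_sub_bound (q q' : ℂ[X]) (m : ℕ) (h1 : q.natDegree ≤ m) (h2 : q'.natDegree ≤ m)
    (z : ℂ) (B : ℝ) (hz : ‖z‖ ≤ B) :
    ‖q.eval z - q'.eval z‖ ≤ ∑ j ∈ Finset.range (m+1), ‖q.coeff j - q'.coeff j‖ * B ^ j := by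
  rw [eval_eq_sum_range' (Nat.lt_succ_of_le h1) z, eval_eq_sum_range' (Nat.lt_succ_of_le h2) z,
    ← Finset.sum_sub_distrib]
  calc ‖∑ j ∈ Finset.range (m+1), (q.coeff j * z ^ j - q'.coeff j * z ^ j)‖
      ≤ ∑ j ∈ Finset.range (m+1), ‖q.coeff j * z ^ j - q'.coeff j * z ^ j‖ := norm_sum_le _ _
    _ ≤ ∑ j ∈ Finset.range (m+1), ‖q.coeff j - q'.coeff j‖ * B ^ j := by
        refine Finset.sum_le_sum (fun j _ => ?_)
        rw [← sub_mul, norm_mul, norm_pow]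
        exact mul_le_mul_of_nonneg_left (pow_le_pow_left₀ (norm_nonneg _) hz _) (norm_nonneg _)

/-- Boundary crossing / zero exclusion principle: for a coefficient-wise
continuous family of real polynomials of fixed degree `m` over a connected
parameter set, if one member is Hurwitz stable and another member has a root
with nonnegative real part, then some member has a purely imaginary root. -/
theorem boundary_crossing (d m : ℕ) (K : Set (Fin d → ℝ)) (hK : IsConnected K)
    (p : (Fin d → ℝ) → ℝ[X])
    (hcont : ∀ j : ℕ, ContinuousOn (fun k => (p k).coeff j) K)
    (hdeg : ∀ k ∈ K, (p k).degree = (m : ℕ))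
    (k₀ k₁ : Fin d → ℝ) (hk₀ : k₀ ∈ K) (hk₁ : k₁ ∈ K)
    (hstable : ∀ z : ℂ, ((p k₀).map (algebraMap ℝ ℂ)).IsRoot z → z.re < 0)
    (hunstable : ∃ z : ℂ, 0 ≤ z.re ∧ ((p k₁).map (algebraMap ℝ ℂ)).IsRoot z) :
    ∃ k ∈ K, ∃ ω : ℝ, ((p k).map (algebraMap ℝ ℂ)).IsRoot (Complex.I * ω) := by
  by_contra hno
  push_neg at hno
  set Q : (Fin d → ℝ) → ℂ[X] := fun k => (p k).map (algebraMap ℝ ℂ) with hQ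
  -- basic facts
  have hqdeg : ∀ k ∈ K, (Q k).degree = (m : ℕ) := by
    intro k hk
    rw [hQ]
    rw [degree_map_eq_of_injective (algebraMap ℝ ℂ).injective]
    exact hdeg k hk
  have hqnat : ∀ k ∈ K, (Q k).natDegree = m := fun k hk =>
    natDegree_eq_of_degree_eq_some (hqdeg k hk)
  have hqne : ∀ k ∈ K, Q k ≠ 0 := by
    intro k hk h0
    have := hqdeg k hk
    rw [h0, degree_zero] at this
    exact absurd this (by simp)
  have hlcQ : ∀ k ∈ K, (Q k).coeff m = (Q k).leadingCoeff := by
    intro k hk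
    rw [← hqnat k hk]
    exact coeff_natDegree
  have hlcne : ∀ k ∈ K, (Q k).coeff m ≠ 0 := by
    intro k hk
    rw [hlcQ k hk]
    exact leadingCoeff_ne_zero.mpr (hqne k hk)
  have hcard : ∀ k ∈ K, Multiset.card (Q k).roots = m := by
    intro k hk
    rw [splits_iff_card_roots.mp (IsAlgClosed.splits (Q k)), hqnat k hk]
  have hre_ne : ∀ k ∈ K, ∀ z : ℂ, (Q k).IsRoot z → z.re ≠ 0 := by
    intro k hk z hz hre
    refine hno k hk z.im ?_
    have : Complex.I * (z.im : ℂ) = z := by apply Complex.ext <;> simp [hre]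
    rwa [this]
  -- subtype setup
  haveI : PreconnectedSpace K := Subtype.preconnectedSpace hK.isPreconnected
  set c : ℕ → K → ℂ := fun j x => (Q x.1).coeff j with hc_def
  have hc : ∀ j, Continuous (c j) := by
    intro j
    have : c j = fun x : K => (((p x.1).coeff j : ℝ) : ℂ) := by
      funext x
      simp [hc_def, hQ, coeff_map, Complex.coe_algebraMap]
    rw [this]
    exact Complex.continuous_ofReal.comp ((hcont j).restrict)
  set S : Set K := {x | ∀ z : ℂ, (Q x.1).IsRoot z → z.re < 0} with hS_def
  set T : Set K := {x | ∃ z : ℂ, 0 < z.re ∧ (Q x.1).IsRoot z} with hT_def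
  have hcover : ∀ x : K, x ∈ S ∪ T := by
    intro x
    by_cases hx : x ∈ S
    · exact Or.inl hx
    · right
      have hx' : ¬ ∀ z : ℂ, (Q x.1).IsRoot z → z.re < 0 := hx
      push_neg at hx'
      obtain ⟨z, hz1, hz2⟩ := hx' 
      exact ⟨z, lt_of_le_of_ne hz2 (Ne.symm (hre_ne x.1 x.2 z hz1)), hz1⟩
  have hdisj : ∀ x : K, x ∈ S → x ∈ T → False := by
    intro x hxS hxT
    obtain ⟨z, hz1, hz2⟩ := hxT
    exact absurd (hxS z hz2) (by linarith)
  -- convergence of coefficients along sequences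
  have hcoef : ∀ (x : ℕ → K) (l : K), Tendsto x atTop (𝓝 l) →
      ∀ j, Tendsto (fun n => c j (x n)) atTop (𝓝 (c j l)) := by
    intro x l hx j
    exact ((hc j).tendsto l).comp hx
  have hsum0 : ∀ (x : ℕ → K) (l : K), Tendsto x atTop (𝓝 l) → ∀ B : ℝ,
      Tendsto (fun n => ∑ j ∈ Finset.range (m+1), ‖c j l - c j (x n)‖ * B ^ j) atTop (𝓝 0) := by
    intro x l hx B
    have h0 : (0:ℝ) = ∑ j ∈ Finset.range (m+1), ‖c j l - c j l‖ * B ^ j := by simp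
    rw [h0]
    refine tendsto_finset_sum _ (fun j _ => ?_)
    exact ((tendsto_const_nhds.sub (hcoef x l hx j)).norm).mul_const _
  -- S is sequentially closed
  have hSclosed : IsSeqClosed S := by
    intro x l hxS hx
    by_contra hlS
    have hlT : l ∈ T := (hcover l).resolve_left hlS
    obtain ⟨z, hzre, hzroot⟩ := hlT
    set L := ‖c m l‖ with hL
    have hLpos : 0 < L := norm_pos_iff.mpr (hlcne l.1 l.2)
    -- lower bound for ‖(Q (x n)).eval z‖
    have hlow : ∀ n, ‖c m (x n)‖ * z.re ^ m ≤ ‖(Q (x n).1).eval z‖ := by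
      intro n
      have hmem : ∀ r ∈ (Q (x n).1).roots, 0 ≤ z.re - r.re := by
        intro r hr
        have := hxS n r ((mem_roots (hqne (x n).1 (x n).2)).mp hr)
        linarith
      calc ‖c m (x n)‖ * z.re ^ m
          = ‖(Q (x n).1).leadingCoeff‖ * z.re ^ m := by
            rw [show c m (x n) = (Q (x n).1).leadingCoeff from hlcQ (x n).1 (x n).2]
        _ ≤ ‖(Q (x n).1).leadingCoeff‖ *
            (Multiset.map (fun r => z.re - r.re) (Q (x n).1).roots).prod := by
            refine mul_le_mul_of_nonneg_left ?_ (norm_nonneg _)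
            have := aux_pow_card_le_prod_map (Q (x n).1).roots (fun r => z.re - r.re) z.re
              (le_of_lt hzre) (fun r hr => by
                have := hxS n r ((mem_roots (hqne (x n).1 (x n).2)).mp hr)
                show z.re ≤ z.re - r.re
                linarith)
            rwa [hcard (x n).1 (x n).2] at this
        _ ≤ ‖(Q (x n).1).eval z‖ := aux_eval_lower_bound _ _ hmem
    -- upper bound tends to 0
    have hup : ∀ n, ‖(Q (x n).1).eval z‖ ≤
        ∑ j ∈ Finset.range (m+1), ‖c (↑j) (x n) - c (↑j) l‖ * ‖z‖ ^ j := by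
      intro n
      have := aux_eval_sub_bound (Q (x n).1) (Q l.1) m
        (le_of_eq (hqnat (x n).1 (x n).2)) (le_of_eq (hqnat l.1 l.2)) z ‖z‖ le_rfl
      rwa [hzroot, sub_zero] at this
    have htend : Tendsto (fun n => ∑ j ∈ Finset.range (m+1), ‖c j (x n) - c j l‖ * ‖z‖ ^ j)
        atTop (𝓝 0) := by
      have h0 : (0:ℝ) = ∑ j ∈ Finset.range (m+1), ‖c j l - c j l‖ * ‖z‖ ^ j := by simp
      rw [h0]
      refine tendsto_finset_sum _ (fun j _ => ?_)
      exact (((hcoef x l hx j).sub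
        (tendsto_const_nhds : Tendsto (fun _ : ℕ => c j l) atTop (𝓝 (c j l)))).norm).mul_const _
    have hev1 : ∀ᶠ n in atTop, L/2 < ‖c m (x n)‖ :=
      (hcoef x l hx m).norm.eventually_const_lt (by linarith)
    have hev2 : ∀ᶠ n in atTop,
        (fun n => ∑ j ∈ Finset.range (m+1), ‖c j (x n) - c j l‖ * ‖z‖ ^ j) n < L/2 * z.re ^ m := by
      refine htend.eventually_lt_const ?_
      positivity
    obtain ⟨n, h1, h2⟩ := (hev1.and hev2).exists
    have : ‖c m (x n)‖ * z.re ^ m ≤ ∑ j ∈ Finset.range (m+1), ‖c j (x n) - c j l‖ * ‖z‖ ^ j :=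
      le_trans (hlow n) (hup n)
    have hzm : (0:ℝ) < z.re ^ m := by positivity
    nlinarith
  -- T is sequentially closed
  have hTclosed : IsSeqClosed T := by
    intro x l hxT hx
    by_contra hlT
    have hlS : l ∈ S := (hcover l).resolve_right hlT
    choose z hz1 hz2 using hxT
    set L := ‖c m l‖ with hL
    have hLpos : 0 < L := norm_pos_iff.mpr (hlcne l.1 l.2)
    set c₀ : ℝ := ‖(Q l.1).leadingCoeff‖ * (Multiset.map (fun r => -r.re) (Q l.1).roots).prod
      with hc₀
    have hrootsneg : ∀ r ∈ (Q l.1).roots, r.re < 0 := by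
      intro r hr
      exact hlS r ((mem_roots (hqne l.1 l.2)).mp hr)
    have hc₀pos : 0 < c₀ := by
      refine mul_pos (norm_pos_iff.mpr (leadingCoeff_ne_zero.mpr (hqne l.1 l.2))) ?_
      refine Multiset.prod_pos ?_
      intro a ha
      obtain ⟨r, hr, rfl⟩ := Multiset.mem_map.mp ha
      have := hrootsneg r hr
      linarith
    -- lower bound: c₀ ≤ ‖(Q l).eval (z n)‖
    have hlow : ∀ n, c₀ ≤ ‖(Q l.1).eval (z n)‖ := by
      intro n
      have hmem : ∀ r ∈ (Q l.1).roots, 0 ≤ (z n).re - r.re := by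
        intro r hr
        have := hrootsneg r hr
        have := hz1 n
        linarith
      calc c₀ ≤ ‖(Q l.1).leadingCoeff‖ *
            (Multiset.map (fun r => (z n).re - r.re) (Q l.1).roots).prod := by
            rw [hc₀]
            refine mul_le_mul_of_nonneg_left ?_ (norm_nonneg _)
            refine aux_prod_map_mono _ _ _ (fun r hr => ?_)
            have h1 := hrootsneg r hr
            have h2 := hz1 n
            constructor <;> linarith
        _ ≤ ‖(Q l.1).eval (z n)‖ := aux_eval_lower_bound _ _ hmem
    -- eventual coefficient bounds
    set M : ℝ := 1 + ∑ i ∈ Finset.range m, ‖c i l‖ with hM_def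
    have hev1 : ∀ᶠ n in atTop, ∀ j ∈ Finset.range m, ‖c j (x n)‖ ≤ M := by
      rw [Filter.eventually_all_finset]
      intro j hj
      have hlt : ‖c j l‖ < M := by
        rw [hM_def]
        have : ‖c j l‖ ≤ ∑ i ∈ Finset.range m, ‖c i l‖ :=
          Finset.single_le_sum (fun i _ => norm_nonneg (c i l)) hj
        linarith
      exact ((hcoef x l hx j).norm.eventually_lt_const hlt).mono (fun n h => le_of_lt h)
    have hev2 : ∀ᶠ n in atTop, L/2 < ‖c m (x n)‖ :=
      (hcoef x l hx m).norm.eventually_const_lt (by linarith)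
    set B : ℝ := max 1 (m * M / (L/2)) with hB_def
    have hB1 : (1:ℝ) ≤ B := le_max_left _ _
    have htend := hsum0 x l hx B
    have hev3 : ∀ᶠ n in atTop,
        (fun n => ∑ j ∈ Finset.range (m+1), ‖c j l - c j (x n)‖ * B ^ j) n < c₀ :=
      htend.eventually_lt_const hc₀pos
    obtain ⟨n, ⟨h1, h2⟩, h3⟩ := ((hev1.and hev2).and hev3).exists
    -- root bound
    have hzb : ‖z n‖ ≤ B := by
      rw [hB_def]
      refine aux_root_norm_bound (Q (x n).1) m (le_of_eq (hqnat (x n).1 (x n).2)) (L/2) M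
        (by linarith) (le_of_lt h2) (fun j hj => h1 j (Finset.mem_range.mpr hj)) (z n) (hz2 n)
    have hub : ‖(Q l.1).eval (z n)‖ ≤
        ∑ j ∈ Finset.range (m+1), ‖c j l - c j (x n)‖ * B ^ j := by
      have := aux_eval_sub_bound (Q l.1) (Q (x n).1) m
        (le_of_eq (hqnat l.1 l.2)) (le_of_eq (hqnat (x n).1 (x n).2)) (z n) B hzb
      rwa [hz2 n, sub_zero] at this
    have := le_trans (hlow n) hub
    linarith
  -- conclude by connectedness
  have hSc : IsClosed S := hSclosed.isClosed
  have hTc : IsClosed T := hTclosed.isClosed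
  have hScompl : S = Tᶜ := by
    ext x
    constructor
    · intro hxS hxT
      exact hdisj x hxS hxT
    · intro hxT
      exact (hcover x).resolve_right hxT
  have hSopen : IsOpen S := by rw [hScompl]; exact hTc.isOpen_compl
  have hSne : S.Nonempty := ⟨⟨k₀, hk₀⟩, fun z hz => hstable z hz⟩
  have hSuniv : S = Set.univ := IsClopen.eq_univ ⟨hSc, hSopen⟩ hSne
  obtain ⟨z, hz1, hz2⟩ := hunstable
  have hk₁T : (⟨k₁, hk₁⟩ : K) ∈ T :=
    ⟨z, lt_of_le_of_ne hz1 (Ne.symm (hre_ne k₁ hk₁ z hz2)), hz2⟩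
  exact hdisj ⟨k₁, hk₁⟩ (hSuniv ▸ Set.mem_univ _) hk₁T
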